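/- Let X and Y be metric spaces, I a nonempty well-ordered index set, and (f_i)_{i ∈ I} a family of multifunctions from X to Y such that: each f_i is pointwise compact (f_i x is compact for every x ∈ X); the family is decreasing, i.e. f_j tightens f_i whenever i < j; and the family is equicontinuous in the Henkin sense, i.e. there exist a function δ assigning to each ε > 0 a real δ(ε) > 0 and a choice function y with y(i,x) ∈ f_i x for every i ∈ I and x ∈ domف f_i, such that for every ε > 0, every i ∈ I, every x ∈ dom f_i and every x' ∈ dom f_i with dist x x' < δ(ε), there exists y' ∈ f_i x' with dist (y(i,x)) y' < ε. Define the multifunction f by f x = ⋂ {f_i x | i ∈ I, f_i x ≠ ∅} (and f x = ∅ if f_i x = ∅ for all i). Then f is pointwise compact, f is Henkin-continuous, and f tightens every f_i. -/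

import Mathlib

open Set Metric

/-- `g` tightens `f`: `dom f ⊆ dom g` and `g x ⊆ f x` on `dom f`. -/
def Tightens {X Y : Type*} (g f : X → Set Y) : Prop :=
  (∀ x, (f x).Nonempty → (g x).Nonempty) ∧ (∀ x, (f x).Nonempty → g x ⊆ f x)

/-- Henkin-continuity of a multifunction between metric spaces: a modulus `δ`
depending only on `ε` and a choice `y x ∈ f x` depending only on `x`. -/
def HenkinContinuous {X Y : Type*} [MetricSpace X] [MetricSpace Y] (f : X → Set Y) : Prop :=
  ∃ δ : ℝ → ℝ, ∃ y : X → Y,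
    (∀ ε > (0:ℝ), δ ε > 0) ∧
    (∀ x, (f x).Nonempty → y x ∈ f x) ∧
    (∀ ε > (0:ℝ), ∀ x, (f x).Nonempty → ∀ x', (f x').Nonempty →
      dist x x' < δ ε → ∃ y' ∈ f x', dist (y x) y' < ε)

private lemma aux_inter_ne {Y : Type*} [MetricSpace Y] {I : Type*} [LinearOrder I]
    {S : Set I} (hSne : S.Nonempty) (K : I → Set Y)
    (hanti : ∀ i ∈ S, ∀ j ∈ S, i ≤ j → K j ⊆ K i)
    (hne : ∀ i ∈ S, (K i).Nonempty)
    (hc : ∀ i ∈ S, IsCompact (K i)) :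
    (⋂ i ∈ S, K i).Nonempty := by
  haveI : Nonempty S := hSne.to_subtype
  rw [biInter_eq_iInter]
  apply IsCompact.nonempty_iInter_of_directed_nonempty_isCompact_isClosed
  · intro i j
    rcases le_total (i : I) j with h | h
    · exact ⟨j, hanti i i.2 j j.2 h, subset_rfl⟩
    · exact ⟨i, subset_rfl, hanti j j.2 i i.2 h⟩
  · exact fun i => hne i i.2
  · exact fun i => hc i i.2
  · exact fun i => (hc i i.2).isClosed

/-- The intersection of a decreasing, Henkin-equicontinuous, well-ordered family
of pointwise compact multifunctions is pointwise compact, Henkin-continuous and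
tightens each member of the family. -/
theorem henkin_intersection_of_equicontinuous_family
    {X Y : Type*} [MetricSpace X] [MetricSpace Y]
    {I : Type*} [LinearOrder I] [WellFoundedLT I] [Nonempty I]
    (f : I → X → Set Y)
    (hcpt : ∀ i x, IsCompact (f i x))
    (hdec : ∀ i j : I, i < j → Tightens (f j) (f i))
    (hequi : ∃ δ : ℝ → ℝ, ∃ y : I → X → Y,
      (∀ ε > (0:ℝ), δ ε > 0) ∧
      (∀ i x, (f i x).Nonempty → y i x ∈ f i x) ∧
      (∀ ε > (0:ℝ), ∀ i : I, ∀ x, (f i x).Nonempty → ∀ x', (f i x').Nonempty →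
        dist x x' < δ ε → ∃ y' ∈ f i x', dist (y i x) y' < ε))
    (F : X → Set Y)
    (hF : ∀ x, F x =
      {y | (∃ i, (f i x).Nonempty) ∧ ∀ i, (f i x).Nonempty → y ∈ f i x}) :
    (∀ x, IsCompact (F x)) ∧ HenkinContinuous F ∧ ∀ i, Tightens F (f i) := by
  classical
  obtain ⟨δ, y, hδ, hy, hcont⟩ := hequi
  have hmono : ∀ (x : X) (i j : I), i ≤ j → (f i x).Nonempty → f j x ⊆ f i x := by
    intro x i j hij hne
    rcases eq_or_lt_of_le hij with rfl | h
    · exact subset_rfl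
    · exact (hdec i j h).2 x hne
  have hup : ∀ (x : X) (i j : I), i ≤ j → (f i x).Nonempty → (f j x).Nonempty := by
    intro x i j hij hne
    rcases eq_or_lt_of_le hij with rfl | h
    · exact hne
    · exact (hdec i j h).1 x hne
  -- key: a cluster point of the choice net, living in the full intersection
  have key : ∀ x, (∃ i, (f i x).Nonempty) → ∃ z : Y,
      (∀ i, (f i x).Nonempty → z ∈ f i x) ∧
      (∀ i, (f i x).Nonempty → ∀ ε > (0:ℝ),
        ∃ j, i ≤ j ∧ (f j x).Nonempty ∧ dist (y j x) z < ε) := by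
    intro x hx
    set C : I → Set Y :=
      fun i => closure {z | ∃ j, i ≤ j ∧ (f j x).Nonempty ∧ z = y j x} with hC
    have hCsub : ∀ i, (f i x).Nonempty → C i ⊆ f i x := by
      intro i hi
      apply closure_minimal _ (hcpt i x).isClosed
      rintro z ⟨j, hij, hj, rfl⟩
      exact hmono x i j hij hi (hy j x hj)
    obtain ⟨z, hz⟩ := aux_inter_ne (S := {i | (f i x).Nonempty}) hx C
      (by
        intro i hi j hj hij
        apply closure_mono
        rintro z ⟨k, hjk, hk, rfl⟩
        exact ⟨k, le_trans hij hjk, hk, rfl⟩)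
      (fun i hi => ⟨y i x, subset_closure ⟨i, le_rfl, hi, rfl⟩⟩)
      (fun i hi => (hcpt i x).of_isClosed_subset isClosed_closure (hCsub i hi))
    simp only [mem_iInter] at hz
    refine ⟨z, fun i hi => hCsub i hi (hz i hi), ?_⟩
    intro i hi ε hε
    have := (Metric.mem_closure_iff).1 (hz i hi) ε hε
    obtain ⟨b, ⟨j, hij, hj, rfl⟩, hb⟩ := this
    exact ⟨j, hij, hj, by rw [dist_comm]; exact hb⟩
  choose yFc hyFc1 hyFc2 using key
  set yF : X → Y := fun x =>
    if hx : ∃ i, (f i x).Nonempty then yFc x hx else y (Classical.arbitrary I) x with hyFdef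
  have hyFeq : ∀ x (hx : ∃ i, (f i x).Nonempty), yF x = yFc x hx := by
    intro x hx
    simp only [hyFdef]
    exact dif_pos hx
  have hFne : ∀ x, (∃ i, (f i x).Nonempty) → (F x).Nonempty := by
    intro x hx
    refine ⟨yF x, ?_⟩
    rw [hF]
    exact ⟨hx, by rw [hyFeq x hx]; exact hyFc1 x hx⟩
  refine ⟨?_, ?_, ?_⟩
  · -- compactness
    intro x
    by_cases hx : ∃ i, (f i x).Nonempty
    · obtain ⟨i0, hi0⟩ := hx
      apply (hcpt i0 x).of_isClosed_subset
      · have hFx : F x = ⋂ i ∈ {i | (f i x).Nonempty}, f i x := by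
          rw [hF]
          ext z
          simp only [mem_setOf_eq, mem_iInter]
          exact ⟨fun h => h.2, fun h => ⟨⟨i0, hi0⟩, h⟩⟩
        rw [hFx]
        exact isClosed_biInter fun i hi => (hcpt i x).isClosed
      · intro z hz
        rw [hF] at hz
        exact hz.2 i0 hi0
    · have : F x = ∅ := by
        rw [hF]
        ext z
        simp only [mem_setOf_eq, mem_empty_iff_false, iff_false, not_and]
        intro h
        exact absurd h hx
      rw [this]
      exact isCompact_empty
  · -- Henkin continuity
    refine ⟨fun ε => δ (ε / 4), yF, fun ε hε => hδ _ (by linarith), ?_, ?_⟩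
    · intro x hFx
      obtain ⟨w, hw⟩ := hFx
      rw [hF] at hw
      have hx := hw.1
      rw [hF]
      exact ⟨hx, by rw [hyFeq x hx]; exact hyFc1 x hx⟩
    · intro ε hε x hFx x' hFx' hdist
      obtain ⟨w, hw⟩ := hFx
      rw [hF] at hw
      have hx : ∃ i, (f i x).Nonempty := hw.1
      obtain ⟨w', hw'⟩ := hFx'
      rw [hF] at hw'
      have hx' : ∃ i, (f i x').Nonempty := hw'.1
      obtain ⟨i1, hi1⟩ := hx
      obtain ⟨i2, hi2⟩ := hx'
      have hxE : ∃ i, (f i x).Nonempty := ⟨i1, hi1⟩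
      set U : Set I := {i | (f i x).Nonempty ∧ (f i x').Nonempty} with hU
      have hUne : U.Nonempty :=
        ⟨max i1 i2, hup x i1 _ (le_max_left _ _) hi1, hup x' i2 _ (le_max_right _ _) hi2⟩
      have hKanti : ∀ i ∈ U, ∀ j ∈ U, i ≤ j →
          f j x' ∩ closedBall (yF x) (ε / 2) ⊆ f i x' ∩ closedBall (yF x) (ε / 2) :=
        fun i hi j _ hij => inter_subset_inter_left _ (hmono x' i j hij hi.2)
      have hKne : ∀ i ∈ U, (f i x' ∩ closedBall (yF x) (ε / 2)).Nonempty := by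
        intro i hi
        obtain ⟨j, hij, hj, hjd⟩ := hyFc2 x hxE i hi.1 (ε / 4) (by linarith)
        rw [← hyFeq x hxE] at hjd
        have hj' : (f j x').Nonempty := hup x' i j hij hi.2
        obtain ⟨z, hzmem, hzd⟩ := hcont (ε / 4) (by linarith) j x hj x' hj' hdist
        refine ⟨z, hmono x' i j hij hi.2 hzmem, ?_⟩
        rw [mem_closedBall]
        have h1 : dist z (yF x) ≤ dist z (y j x) + dist (y j x) (yF x) := dist_triangle _ _ _
        rw [dist_comm] at hzd
        linarith
      have hKcpt : ∀ i ∈ U, IsCompact (f i x' ∩ closedBall (yF x) (ε / 2)) :=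
        fun i _ => (hcpt i x').inter_right Metric.isClosed_closedBall
      obtain ⟨y', hy'⟩ := aux_inter_ne hUne _ hKanti hKne hKcpt
      simp only [mem_iInter, mem_inter_iff] at hy'
      obtain ⟨i0, hi0⟩ := hUne
      refine ⟨y', ?_, ?_⟩
      · rw [hF]
        refine ⟨⟨i2, hi2⟩, fun i hi => ?_⟩
        have hjU : max i i1 ∈ U :=
          ⟨hup x i1 _ (le_max_right _ _) hi1, hup x' i _ (le_max_left _ _) hi⟩
        exact hmono x' i (max i i1) (le_max_left _ _) hi (hy' _ hjU).1
      · have hball := (hy' _ hi0).2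
        rw [mem_closedBall] at hball
        rw [dist_comm]
        linarith
  · -- tightens every member
    intro i
    constructor
    · intro x hx
      exact hFne x ⟨i, hx⟩
    · intro x hx z hz
      rw [hF] at hz
      exact hz.2 i hx
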